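/- arXiv:1402.0357 — 4 statements merged into one kernel-verified Lean document; each statement's English description precedes it below -/
import Mathlib

section
/- Lemma (simplification): Let α>0 and let ν:(0,∞)²→[0,∞) be measurable, homogeneous of order −α (ν(tx,ty) = t^{−α}·ν(x,y) for all t,x,y>0), with ∫_1^∞ ν(x,1) x^{−1} dx < ∞ and ∫_1^∞ ν(1,y) y^{−1} dy < ∞. Then: (i) ∫_1^∞ ∫_y^∞ ν(x,y)·(xy)^{−1} dx dy = (1/α)·∫_1^∞ ν(x,1) x^{−1} dx; (ii) ∫_1^∞ ∫_x^∞ ν(x,y)·(xy)^{−1} dy dx = (1/α)·∫_1^∞ ν(1,y) y^{−1} dy; and consequently (iii) ∫_1^∞ ∫_1^∞ ν(x,y)·(xy)^{−1} dx dy = (1/α)·∫_1^∞ ν(x,1) x^{−1} dx + (1/α)·∫_1^∞ ν(1,y) y^{−1} dy. -/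
open MeasureTheory Filter Topology Set

private lemma nu_lemA {α : ℝ} {ν : ℝ → ℝ → ℝ}
    (hhom : ∀ t x y : ℝ, 0 < t → 0 < x → 0 < y → ν (t * x) (t * y) = t ^ (-α) * ν x y)
    (hint1 : IntegrableOn (fun x : ℝ => ν x 1 / x) (Set.Ioi 1))
    {y : ℝ} (hy : 0 < y) :
    IntegrableOn (fun x => ν x y / (x * y)) (Set.Ioi y) ∧
      ∫ x in Set.Ioi y, ν x y / (x * y) =
        y ^ (-α - 1) * ∫ x in Set.Ioi 1, ν x 1 / x := by
  have hcong : Set.EqOn (fun x => ν (y * x) y / (y * x * y))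
      (fun x => y ^ (-α - 2) * (ν x 1 / x)) (Set.Ioi 1) := by
    intro x hx
    have hx0 : (0:ℝ) < x := lt_trans one_pos hx
    have h1 : ν (y * x) y = y ^ (-α) * ν x 1 := by
      simpa using hhom y x 1 hy hx0 one_pos
    have h2 : y ^ (-α - 2 : ℝ) = y ^ (-α) / (y * y) := by
      rw [show (-α - 2 : ℝ) = -α + (-2) by ring, Real.rpow_add hy,
        show ((-2 : ℝ)) = ((-2 : ℤ) : ℝ) by norm_num, Real.rpow_intCast,
        zpow_neg, zpow_two, div_eq_mul_inv]
    simp only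
    rw [h1, h2, div_mul_div_comm]
    ring_nf
  have hsub := integral_comp_mul_left_Ioi (fun x => ν x y / (x * y)) 1 hy
  simp only [mul_one, smul_eq_mul] at hsub
  rw [setIntegral_congr_fun measurableSet_Ioi hcong, integral_const_mul] at hsub
  have hI : ∫ x in Set.Ioi y, ν x y / (x * y) =
      y * (y ^ (-α - 2) * ∫ x in Set.Ioi 1, ν x 1 / x) := by
    rw [hsub, ← mul_assoc, mul_inv_cancel₀ hy.ne', one_mul]
  have hy3 : y * y ^ (-α - 2 : ℝ) = y ^ (-α - 1 : ℝ) := by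
    nth_rewrite 1 [← Real.rpow_one y]
    rw [← Real.rpow_add hy]
    ring_nf
  constructor
  · have hi1 : IntegrableOn (fun x => y ^ (-α - 2) * (ν x 1 / x)) (Set.Ioi 1) :=
      hint1.const_mul _
    have hi2 : IntegrableOn (fun x => ν (y * x) y / (y * x * y)) (Set.Ioi 1) :=
      hi1.congr_fun hcong.symm measurableSet_Ioi
    have := (integrableOn_Ioi_comp_mul_left_iff (fun x => ν x y / (x * y)) 1 hy).mp hi2
    rwa [mul_one] at this
  · rw [hI, ← mul_assoc, hy3]

private lemma nu_lemB {α : ℝ} {ν : ℝ → ℝ → ℝ}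
    (hhom : ∀ t x y : ℝ, 0 < t → 0 < x → 0 < y → ν (t * x) (t * y) = t ^ (-α) * ν x y)
    (hint2 : IntegrableOn (fun y : ℝ => ν 1 y / y) (Set.Ioi 1))
    {x : ℝ} (hx : 0 < x) :
    IntegrableOn (fun y => ν x y / (x * y)) (Set.Ioi x) ∧
      ∫ y in Set.Ioi x, ν x y / (x * y) =
        x ^ (-α - 1) * ∫ y in Set.Ioi 1, ν 1 y / y := by
  have hcong : Set.EqOn (fun y => ν x (x * y) / (x * (x * y)))
      (fun y => x ^ (-α - 2) * (ν 1 y / y)) (Set.Ioi 1) := by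
    intro y hy
    have hy0 : (0:ℝ) < y := lt_trans one_pos hy
    have h1 : ν x (x * y) = x ^ (-α) * ν 1 y := by
      simpa using hhom x 1 y hx one_pos hy0
    have h2 : x ^ (-α - 2 : ℝ) = x ^ (-α) / (x * x) := by
      rw [show (-α - 2 : ℝ) = -α + (-2) by ring, Real.rpow_add hx,
        show ((-2 : ℝ)) = ((-2 : ℤ) : ℝ) by norm_num, Real.rpow_intCast,
        zpow_neg, zpow_two, div_eq_mul_inv]
    simp only
    rw [h1, h2, div_mul_div_comm]
    ring_nf
  have hsub := integral_comp_mul_left_Ioi (fun y => ν x y / (x * y)) 1 hx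
  simp only [mul_one, smul_eq_mul] at hsub
  rw [setIntegral_congr_fun measurableSet_Ioi hcong, integral_const_mul] at hsub
  have hI : ∫ y in Set.Ioi x, ν x y / (x * y) =
      x * (x ^ (-α - 2) * ∫ y in Set.Ioi 1, ν 1 y / y) := by
    rw [hsub, ← mul_assoc, mul_inv_cancel₀ hx.ne', one_mul]
  have hx3 : x * x ^ (-α - 2 : ℝ) = x ^ (-α - 1 : ℝ) := by
    nth_rewrite 1 [← Real.rpow_one x]
    rw [← Real.rpow_add hx]
    ring_nf
  constructor
  · have hi1 : IntegrableOn (fun y => x ^ (-α - 2) * (ν 1 y / y)) (Set.Ioi 1) :=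
      hint2.const_mul _
    have hi2 : IntegrableOn (fun y => ν x (x * y) / (x * (x * y))) (Set.Ioi 1) :=
      hi1.congr_fun hcong.symm measurableSet_Ioi
    have := (integrableOn_Ioi_comp_mul_left_iff (fun y => ν x y / (x * y)) 1 hx).mp hi2
    rwa [mul_one] at this
  · rw [hI, ← mul_assoc, hx3]

private lemma nu_rpow_int {α : ℝ} (hα : 0 < α) :
    ∫ y in Set.Ioi (1:ℝ), y ^ (-α - 1) = α⁻¹ := by
  rw [integral_Ioi_rpow_of_lt (by linarith) one_pos, show (-α - 1 + 1 : ℝ) = -α by ring,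
    Real.one_rpow]
  field_simp

private noncomputable def Faux (ν : ℝ → ℝ → ℝ) : ℝ × ℝ → ℝ :=
  fun p => if p.1 ≤ p.2 then ν p.1 p.2 / (p.1 * p.2) else 0


/-- Lemma (simplification): for a measurable, `(−α)`-homogeneous `ν : (0,∞)² → [0,∞)` with
integrable sections, the double integrals over the regions `{x > y ≥ 1}`, `{y > x ≥ 1}`
and `[1,∞)²` of `ν(x,y)/(xy)` reduce to one-dimensional integrals. -/
theorem nu_integral_simplification
    (α : ℝ) (hα : 0 < α) (ν : ℝ → ℝ → ℝ)
    (hmeas : Measurable (fun p : ℝ × ℝ => ν p.1 p.2))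
    (hnonneg : ∀ x y : ℝ, 0 < x → 0 < y → 0 ≤ ν x y)
    (hhom : ∀ t x y : ℝ, 0 < t → 0 < x → 0 < y → ν (t * x) (t * y) = t ^ (-α) * ν x y)
    (hint1 : IntegrableOn (fun x : ℝ => ν x 1 / x) (Set.Ioi 1))
    (hint2 : IntegrableOn (fun y : ℝ => ν 1 y / y) (Set.Ioi 1)) :
    (∫ y in Set.Ioi (1 : ℝ), ∫ x in Set.Ioi y, ν x y / (x * y)) =
        α⁻¹ * ∫ x in Set.Ioi (1 : ℝ), ν x 1 / x ∧
    (∫ x in Set.Ioi (1 : ℝ), ∫ y in Set.Ioi x, ν x y / (x * y)) =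
        α⁻¹ * ∫ y in Set.Ioi (1 : ℝ), ν 1 y / y ∧
    (∫ y in Set.Ioi (1 : ℝ), ∫ x in Set.Ioi (1 : ℝ), ν x y / (x * y)) =
        α⁻¹ * (∫ x in Set.Ioi (1 : ℝ), ν x 1 / x) +
          α⁻¹ * ∫ y in Set.Ioi (1 : ℝ), ν 1 y / y := by
  have hrint : IntegrableOn (fun t : ℝ => t ^ (-α - 1)) (Set.Ioi 1) :=
    integrableOn_Ioi_rpow_of_lt (by linarith) one_pos
  have part1 : (∫ y in Set.Ioi (1 : ℝ), ∫ x in Set.Ioi y, ν x y / (x * y)) =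
      α⁻¹ * ∫ x in Set.Ioi (1 : ℝ), ν x 1 / x := by
    rw [setIntegral_congr_fun measurableSet_Ioi
      (fun y (hy : y ∈ Set.Ioi (1:ℝ)) => (nu_lemA hhom hint1 (lt_trans one_pos hy)).2),
      integral_mul_const, nu_rpow_int hα]
  have part2 : (∫ x in Set.Ioi (1 : ℝ), ∫ y in Set.Ioi x, ν x y / (x * y)) =
      α⁻¹ * ∫ y in Set.Ioi (1 : ℝ), ν 1 y / y := by
    rw [setIntegral_congr_fun measurableSet_Ioi
      (fun x (hx : x ∈ Set.Ioi (1:ℝ)) => (nu_lemB hhom hint2 (lt_trans one_pos hx)).2),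
      integral_mul_const, nu_rpow_int hα]
  refine ⟨part1, part2, ?_⟩
  -- part 3
  have hFmeas : Measurable (Faux ν) :=
    Measurable.ite (measurableSet_le measurable_fst measurable_snd)
      (hmeas.div (measurable_fst.mul measurable_snd)) measurable_const
  have hnnF : ∀ x y : ℝ, 0 < x → 0 < y → 0 ≤ Faux ν (x, y) := by
    intro x y hx hy
    unfold Faux
    dsimp only
    split_ifs with h
    · exact div_nonneg (hnonneg x y hx hy) (le_of_lt (mul_pos hx hy))
    · exact le_rfl
  have hsec : ∀ x : ℝ,
      (fun y => Faux ν (x, y)) = (Set.Ici x).indicator (fun y => ν x y / (x * y)) := by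
    intro x
    ext y
    simp only [Faux, Set.indicator_apply, Set.mem_Ici]
  have hsecx : ∀ y : ℝ,
      (fun x => Faux ν (x, y)) = (Set.Iic y).indicator (fun x => ν x y / (x * y)) := by
    intro y
    ext x
    simp only [Faux, Set.indicator_apply, Set.mem_Iic]
  have hIciIoi : ∀ x : ℝ, 1 < x → Set.Ici x ∩ Set.Ioi 1 = Set.Ici x :=
    fun x hx => Set.inter_eq_left.mpr (fun z hz => lt_of_lt_of_le hx hz)
  have hxint : ∀ x : ℝ, 1 < x →
      Integrable (fun y => Faux ν (x, y)) (volume.restrict (Set.Ioi (1:ℝ))) := by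
    intro x hx
    rw [hsec x, integrable_indicator_iff measurableSet_Ici, IntegrableOn,
      Measure.restrict_restrict measurableSet_Ici, hIciIoi x hx, ← IntegrableOn,
      integrableOn_Ici_iff_integrableOn_Ioi]
    exact (nu_lemB hhom hint2 (lt_trans one_pos hx)).1
  have hxval : ∀ x : ℝ, 1 < x → (∫ y in Set.Ioi (1:ℝ), Faux ν (x, y))
      = x ^ (-α - 1) * ∫ y in Set.Ioi 1, ν 1 y / y := by
    intro x hx
    rw [hsec x, integral_indicator measurableSet_Ici,
      Measure.restrict_restrict measurableSet_Ici, hIciIoi x hx,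
      ← Measure.restrict_congr_set Ioi_ae_eq_Ici]
    exact (nu_lemB hhom hint2 (lt_trans one_pos hx)).2
  have hnorm : (fun x => ∫ y in Set.Ioi (1:ℝ), ‖Faux ν (x, y)‖)
      =ᵐ[volume.restrict (Set.Ioi (1:ℝ))]
      fun x => x ^ (-α - 1) * ∫ y in Set.Ioi 1, ν 1 y / y := by
    filter_upwards [ae_restrict_mem measurableSet_Ioi] with x hx
    have heq : (∫ y in Set.Ioi (1:ℝ), ‖Faux ν (x, y)‖)
        = ∫ y in Set.Ioi (1:ℝ), Faux ν (x, y) :=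
      setIntegral_congr_fun measurableSet_Ioi fun y hy =>
        Real.norm_of_nonneg (hnnF x y (lt_trans one_pos hx) (lt_trans one_pos hy))
    rw [heq, hxval x hx]
  have hFint : Integrable (Faux ν)
      ((volume.restrict (Set.Ioi (1:ℝ))).prod (volume.restrict (Set.Ioi (1:ℝ)))) := by
    refine (integrable_prod_iff hFmeas.aestronglyMeasurable).mpr ⟨?_, ?_⟩
    · filter_upwards [ae_restrict_mem measurableSet_Ioi] with x hx
      exact hxint x hx
    · exact (hrint.mul_const _).congr hnorm.symm
  have hswap : (∫ x in Set.Ioi (1:ℝ), ∫ y in Set.Ioi (1:ℝ), Faux ν (x, y))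
      = ∫ y in Set.Ioi (1:ℝ), ∫ x in Set.Ioi (1:ℝ), Faux ν (x, y) :=
    integral_integral_swap (f := fun x y => Faux ν (x, y)) hFint
  have hyx : (∫ y in Set.Ioi (1:ℝ), ∫ x in Set.Ioi (1:ℝ), Faux ν (x, y))
      = α⁻¹ * ∫ y in Set.Ioi (1:ℝ), ν 1 y / y := by
    rw [← hswap,
      setIntegral_congr_fun measurableSet_Ioi
        (fun x (hx : x ∈ Set.Ioi (1:ℝ)) => hxval x hx),
      integral_mul_const, nu_rpow_int hα]
  have hsplit : (fun y => ∫ x in Set.Ioi 1, ν x y / (x * y))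
      =ᵐ[volume.restrict (Set.Ioi (1:ℝ))]
      fun y => (∫ x in Set.Ioi 1, Faux ν (x, y))
        + y ^ (-α - 1) * ∫ x in Set.Ioi 1, ν x 1 / x := by
    filter_upwards [hFint.prod_left_ae, ae_restrict_mem measurableSet_Ioi] with y hyint hy
    have hy1 : (1:ℝ) < y := hy
    have hIic : Set.Iic y ∩ Set.Ioi 1 = Set.Ioc 1 y := by
      rw [Set.inter_comm]; exact Set.Ioi_inter_Iic
    have hIoc : IntegrableOn (fun x => ν x y / (x * y)) (Set.Ioc 1 y) := by
      rw [hsecx y, integrable_indicator_iff measurableSet_Iic] at hyint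
      rwa [IntegrableOn, Measure.restrict_restrict measurableSet_Iic, hIic] at hyint
    have hIoi := (nu_lemA hhom hint1 (lt_trans one_pos hy1)).1
    have hInd : (∫ x in Set.Ioi (1:ℝ), Faux ν (x, y))
        = ∫ x in Set.Ioc 1 y, ν x y / (x * y) := by
      rw [hsecx y, integral_indicator measurableSet_Iic,
        Measure.restrict_restrict measurableSet_Iic, hIic]
    calc (∫ x in Set.Ioi (1:ℝ), ν x y / (x * y))
        = ∫ x in Set.Ioc 1 y ∪ Set.Ioi y, ν x y / (x * y) := by
          rw [Set.Ioc_union_Ioi_eq_Ioi hy1.le]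
      _ = (∫ x in Set.Ioc 1 y, ν x y / (x * y)) + ∫ x in Set.Ioi y, ν x y / (x * y) :=
          setIntegral_union ((Set.Iic_disjoint_Ioi le_rfl).mono_left Set.Ioc_subset_Iic_self)
            measurableSet_Ioi hIoc hIoi
      _ = (∫ x in Set.Ioi (1:ℝ), Faux ν (x, y))
            + y ^ (-α - 1) * ∫ x in Set.Ioi 1, ν x 1 / x := by
          rw [← hInd, (nu_lemA hhom hint1 (lt_trans one_pos hy1)).2]
  calc (∫ y in Set.Ioi (1:ℝ), ∫ x in Set.Ioi (1:ℝ), ν x y / (x * y))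
      = ∫ y in Set.Ioi (1:ℝ), ((∫ x in Set.Ioi 1, Faux ν (x, y))
          + y ^ (-α - 1) * ∫ x in Set.Ioi 1, ν x 1 / x) := integral_congr_ae hsplit
    _ = (∫ y in Set.Ioi (1:ℝ), ∫ x in Set.Ioi 1, Faux ν (x, y))
          + ∫ y in Set.Ioi (1:ℝ), (y ^ (-α - 1) * ∫ x in Set.Ioi 1, ν x 1 / x) :=
        integral_add hFint.integral_prod_right (hrint.mul_const _)
    _ = α⁻¹ * (∫ x in Set.Ioi (1 : ℝ), ν x 1 / x)
          + α⁻¹ * ∫ y in Set.Ioi (1 : ℝ), ν 1 y / y := by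
        rw [hyx, integral_mul_const, nu_rpow_int hα, add_comm]
end

section
/- Bivariate exponent-measure limit for the Gumbel copula (Example): Let α>0 and β≥1, and let C_β(u,v) = exp(−((−log u)^β + (−log v)^β)^{1/β}) for u,v ∈ (0,1] be the bivariate Gumbel copula. Let G and H be cdfs on (0,∞) and a,b:(1,∞)→(0,∞) be such that for every x>0, t·(1−G(a(t)x)) → x^{−α} and t·(1−H(b(t)x)) → x^{−α} as t→∞. Define the joint survival function F̄(s,u) = (1−G(s)) + (1−H(u)) − 1 + C_β(G(s), H(u)). Then for all x,y>0, t·F̄(a(t)x, b(t)y) → x^{−α} + y^{−α} − (x^{−αβ} + y^{−αβ})^{1/β} as t→∞. -/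
open Filter Topology

noncomputable section

/-- The bivariate Gumbel copula with dependence coefficient `β ≥ 1`. -/
def gumbelCopula (β : ℝ) (u v : ℝ) : ℝ :=
  Real.exp (-(((-Real.log u) ^ β + (-Real.log v) ^ β) ^ (β⁻¹)))

lemma tendsto_neg_log_one_sub_div :
    Tendsto (fun p : ℝ => -Real.log (1 - p) / p) (𝓝[≠] 0) (𝓝 1) := by
  have h : HasDerivAt Real.log 1 1 := by
    simpa using Real.hasDerivAt_log one_ne_zero
  rw [hasDerivAt_iff_tendsto_slope] at h
  have hmap : Tendsto (fun p : ℝ => 1 - p) (𝓝[≠] (0:ℝ)) (𝓝[≠] (1:ℝ)) := by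
    rw [tendsto_nhdsWithin_iff]
    constructor
    · have hc : Continuous (fun p : ℝ => 1 - p) := by continuity
      have h1 : Tendsto (fun p : ℝ => 1 - p) (𝓝 (0:ℝ)) (𝓝 1) := by
        simpa using hc.tendsto (0:ℝ)
      exact h1.mono_left nhdsWithin_le_nhds
    · filter_upwards [self_mem_nhdsWithin] with p hp
      simp only [Set.mem_compl_iff, Set.mem_singleton_iff] at hp ⊢
      intro hc; apply hp; linarith
  have h2 := h.comp hmap
  refine h2.congr' ?_
  filter_upwards [self_mem_nhdsWithin] with p hp
  have hp0 : p ≠ 0 := hp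
  simp only [Function.comp_apply, slope_def_field, Real.log_one, sub_zero]
  have he : (1:ℝ) - p - 1 = -p := by ring
  rw [he, div_neg, neg_div]

lemma tendsto_exp_sub_one_div :
    Tendsto (fun z : ℝ => (Real.exp z - 1) / z) (𝓝[≠] 0) (𝓝 1) := by
  have h : HasDerivAt Real.exp 1 0 := by simpa using Real.hasDerivAt_exp 0
  rw [hasDerivAt_iff_tendsto_slope] at h
  refine h.congr' ?_
  filter_upwards [self_mem_nhdsWithin] with z hz
  simp [slope_def_field]

lemma key_limit (β X Y : ℝ) (hβ : 1 ≤ β) (hX : 0 < X) (hY : 0 < Y)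
    (p q : ℝ → ℝ) (hp0 : ∀ t, 0 ≤ p t) (hp1 : ∀ t, p t ≤ 1)
    (hq0 : ∀ t, 0 ≤ q t) (hq1 : ∀ t, q t ≤ 1)
    (hA : Tendsto (fun t => t * p t) atTop (𝓝 X))
    (hB : Tendsto (fun t => t * q t) atTop (𝓝 Y)) :
    Tendsto (fun t => t * (p t + q t - 1 +
        Real.exp (-(((-Real.log (1 - p t)) ^ β + (-Real.log (1 - q t)) ^ β) ^ (β⁻¹)))))
      atTop (𝓝 (X + Y - (X ^ β + Y ^ β) ^ (β⁻¹))) := by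
  have hβ0 : (0:ℝ) < β := lt_of_lt_of_le one_pos hβ
  have hu0 : ∀ t, 0 ≤ -Real.log (1 - p t) := fun t =>
    neg_nonneg.2 (Real.log_nonpos (by linarith [hp1 t]) (by linarith [hp0 t]))
  have hv0 : ∀ t, 0 ≤ -Real.log (1 - q t) := fun t =>
    neg_nonneg.2 (Real.log_nonpos (by linarith [hq1 t]) (by linarith [hq0 t]))
  have hPto0 : Tendsto p atTop (𝓝 0) := by
    have h := hA.mul tendsto_inv_atTop_zero
    rw [mul_zero] at h
    refine h.congr' ?_
    filter_upwards [eventually_gt_atTop (0:ℝ)] with t ht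
    rw [mul_comm t (p t), mul_assoc, mul_inv_cancel₀ ht.ne', mul_one]
  have hQto0 : Tendsto q atTop (𝓝 0) := by
    have h := hB.mul tendsto_inv_atTop_zero
    rw [mul_zero] at h
    refine h.congr' ?_
    filter_upwards [eventually_gt_atTop (0:ℝ)] with t ht
    rw [mul_comm t (q t), mul_assoc, mul_inv_cancel₀ ht.ne', mul_one]
  have hPpos : ∀ᶠ t in atTop, 0 < p t := by
    filter_upwards [hA.eventually (eventually_gt_nhds hX), eventually_gt_atTop (0:ℝ)] with t h1 h2
    by_contra hc; push_neg at hc; nlinarith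
  have hQpos : ∀ᶠ t in atTop, 0 < q t := by
    filter_upwards [hB.eventually (eventually_gt_nhds hY), eventually_gt_atTop (0:ℝ)] with t h1 h2
    by_contra hc; push_neg at hc; nlinarith
  have hPne : Tendsto p atTop (𝓝[≠] (0:ℝ)) :=
    tendsto_nhdsWithin_iff.mpr ⟨hPto0, hPpos.mono fun t ht => ht.ne'⟩
  have hQne : Tendsto q atTop (𝓝[≠] (0:ℝ)) :=
    tendsto_nhdsWithin_iff.mpr ⟨hQto0, hQpos.mono fun t ht => ht.ne'⟩
  have hU : Tendsto (fun t => t * (-Real.log (1 - p t))) atTop (𝓝 X) := by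
    have h2 : Tendsto (fun t => -Real.log (1 - p t) / p t) atTop (𝓝 1) :=
      tendsto_neg_log_one_sub_div.comp hPne
    have h := hA.mul h2
    rw [mul_one] at h
    refine h.congr' ?_
    filter_upwards [hPpos] with t ht
    field_simp [ht.ne']
  have hV : Tendsto (fun t => t * (-Real.log (1 - q t))) atTop (𝓝 Y) := by
    have h2 : Tendsto (fun t => -Real.log (1 - q t) / q t) atTop (𝓝 1) :=
      tendsto_neg_log_one_sub_div.comp hQne
    have h := hB.mul h2
    rw [mul_one] at h
    refine h.congr' ?_
    filter_upwards [hQpos] with t ht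
    field_simp [ht.ne']
  have hK : 0 < (X ^ β + Y ^ β) ^ (β⁻¹) :=
    Real.rpow_pos_of_pos (add_pos (Real.rpow_pos_of_pos hX β) (Real.rpow_pos_of_pos hY β)) _
  have hTL : Tendsto
      (fun t => t * (((-Real.log (1 - p t)) ^ β + (-Real.log (1 - q t)) ^ β) ^ (β⁻¹)))
      atTop (𝓝 ((X ^ β + Y ^ β) ^ (β⁻¹))) := by
    have h : Tendsto
        (fun t => ((t * -Real.log (1 - p t)) ^ β + (t * -Real.log (1 - q t)) ^ β) ^ (β⁻¹))
        atTop (𝓝 ((X ^ β + Y ^ β) ^ (β⁻¹))) :=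
      ((hU.rpow_const (Or.inl hX.ne')).add (hV.rpow_const (Or.inl hY.ne'))).rpow_const
        (Or.inl (add_pos (Real.rpow_pos_of_pos hX β) (Real.rpow_pos_of_pos hY β)).ne')
    refine h.congr' ?_
    filter_upwards [eventually_gt_atTop (0:ℝ)] with t ht
    rw [Real.mul_rpow ht.le (hu0 t), Real.mul_rpow ht.le (hv0 t), ← mul_add,
      Real.mul_rpow (Real.rpow_nonneg ht.le β)
        (add_nonneg (Real.rpow_nonneg (hu0 t) β) (Real.rpow_nonneg (hv0 t) β)),
      ← Real.rpow_mul ht.le, mul_inv_cancel₀ hβ0.ne', Real.rpow_one]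
  have hLto0 : Tendsto
      (fun t => (((-Real.log (1 - p t)) ^ β + (-Real.log (1 - q t)) ^ β) ^ (β⁻¹)))
      atTop (𝓝 0) := by
    have h := hTL.mul tendsto_inv_atTop_zero
    rw [mul_zero] at h
    refine h.congr' ?_
    filter_upwards [eventually_gt_atTop (0:ℝ)] with t ht
    rw [mul_comm, ← mul_assoc, inv_mul_cancel₀ ht.ne', one_mul]
  have hLpos : ∀ᶠ t in atTop,
      0 < (((-Real.log (1 - p t)) ^ β + (-Real.log (1 - q t)) ^ β) ^ (β⁻¹)) := by
    filter_upwards [hTL.eventually (eventually_gt_nhds hK), eventually_gt_atTop (0:ℝ)] with t h1 h2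
    by_contra hc; push_neg at hc; nlinarith
  have hnegL : Tendsto
      (fun t => -((((-Real.log (1 - p t)) ^ β + (-Real.log (1 - q t)) ^ β) ^ (β⁻¹))))
      atTop (𝓝[≠] (0:ℝ)) :=
    tendsto_nhdsWithin_iff.mpr ⟨by simpa using hLto0.neg,
      hLpos.mono fun t ht => neg_ne_zero.mpr ht.ne'⟩
  have hE : Tendsto
      (fun t => (Real.exp (-((((-Real.log (1 - p t)) ^ β + (-Real.log (1 - q t)) ^ β) ^ (β⁻¹)))) - 1)
        / -((((-Real.log (1 - p t)) ^ β + (-Real.log (1 - q t)) ^ β) ^ (β⁻¹))))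
      atTop (𝓝 1) := tendsto_exp_sub_one_div.comp hnegL
  have hfin := (hA.add hB).sub (hTL.mul hE)
  rw [mul_one] at hfin
  refine hfin.congr' ?_
  filter_upwards [hLpos] with t ht
  generalize hLg : ((-Real.log (1 - p t)) ^ β + (-Real.log (1 - q t)) ^ β) ^ (β⁻¹) = L at ht ⊢
  have hL : L ≠ 0 := ht.ne'
  field_simp
  ring

/-- Bivariate exponent-measure limit for the Gumbel copula: if `t(1−G(a(t)x)) → x^{−α}`
and `t(1−H(b(t)y)) → y^{−α}`, then the joint survival function built from the Gumbel copula
satisfies `t·F̄(a(t)x, b(t)y) → x^{−α} + y^{−α} − (x^{−αβ} + y^{−αβ})^{1/β}`. -/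
theorem gumbel_exponent_measure_limit
    (α β : ℝ) (hα : 0 < α) (hβ : 1 ≤ β)
    (G H : ℝ → ℝ) (hGmono : Monotone G) (hHmono : Monotone H)
    (hG01 : ∀ s, 0 ≤ G s ∧ G s ≤ 1) (hH01 : ∀ s, 0 ≤ H s ∧ H s ≤ 1)
    (a b : ℝ → ℝ)
    (hGa : ∀ x : ℝ, 0 < x →
      Tendsto (fun t : ℝ => t * (1 - G (a t * x))) atTop (𝓝 (x ^ (-α))))
    (hHb : ∀ x : ℝ, 0 < x →
      Tendsto (fun t : ℝ => t * (1 - H (b t * x))) atTop (𝓝 (x ^ (-α)))) :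
    ∀ x y : ℝ, 0 < x → 0 < y →
      Tendsto (fun t : ℝ => t * ((1 - G (a t * x)) + (1 - H (b t * y)) - 1 +
          gumbelCopula β (G (a t * x)) (H (b t * y))))
        atTop
        (𝓝 (x ^ (-α) + y ^ (-α) - (x ^ (-(α * β)) + y ^ (-(α * β))) ^ (β⁻¹))) := by
  intro x y hx hy
  have hkey := key_limit β (x ^ (-α)) (y ^ (-α)) hβ
    (Real.rpow_pos_of_pos hx _) (Real.rpow_pos_of_pos hy _)
    (fun t => 1 - G (a t * x)) (fun t => 1 - H (b t * y))
    (fun t => by show (0:ℝ) ≤ 1 - G (a t * x); linarith [(hG01 (a t * x)).2])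
    (fun t => by show 1 - G (a t * x) ≤ 1; linarith [(hG01 (a t * x)).1])
    (fun t => by show (0:ℝ) ≤ 1 - H (b t * y); linarith [(hH01 (b t * y)).2])
    (fun t => by show 1 - H (b t * y) ≤ 1; linarith [(hH01 (b t * y)).1])
    (hGa x hx) (hHb y hy)
  have hXβ : (x ^ (-α)) ^ β = x ^ (-(α * β)) := by
    rw [← Real.rpow_mul hx.le, neg_mul]
  have hYβ : (y ^ (-α)) ^ β = y ^ (-(α * β)) := by
    rw [← Real.rpow_mul hy.le, neg_mul]
  rw [hXβ, hYβ] at hkey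
  refine hkey.congr ?_
  intro t
  simp [gumbelCopula, sub_sub_cancel]
end
end

section
/- Uniform rate for the Generalized Pareto distribution: Let α>0 and consider the Generalized Pareto survival function F̄(s) = (1 + s/α)^{−α} for s ≥ 0, with quantile function a(t) = α·(t^{1/α} − 1) for t > 1 (so that F̄(a(t)) = 1/t). Then there exists a constant C > 0 such that for all t ≥ 2, sup_{x ≥ 1} | t·F̄(a(t)·x) − x^{−α} | ≤ C·t^{−1/α}. -/
open Filter Topology

lemma bernoulli_neg_aux {s p : ℝ} (hs : 0 ≤ s) (hp : 0 ≤ p) :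
    1 - p * s ≤ (1 + s) ^ (-p) := by
  have h1 : (0:ℝ) < 1 + s := by linarith
  rw [Real.rpow_def_of_pos h1]
  have hlog : Real.log (1 + s) ≤ s := by
    have := Real.log_le_sub_one_of_pos h1; linarith
  have hlog0 : 0 ≤ Real.log (1 + s) := Real.log_nonneg (by linarith)
  have hexp := Real.add_one_le_exp (Real.log (1 + s) * -p)
  nlinarith [mul_le_mul_of_nonneg_left hlog hp]

/-- Uniform rate for the Generalized Pareto distribution: with survival function
`F̄(s) = (1+s/α)^{−α}` and quantile `a(t) = α(t^{1/α}−1)`, there is `C > 0` such that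
for all `t ≥ 2`, `sup_{x ≥ 1} |t·F̄(a(t)x) − x^{−α}| ≤ C·t^{−1/α}`. -/
theorem gpd_uniform_rate (α : ℝ) (hα : 0 < α) :
    ∃ C : ℝ, 0 < C ∧ ∀ t : ℝ, 2 ≤ t → ∀ x : ℝ, 1 ≤ x →
      |t * (1 + (α * (t ^ α⁻¹ - 1)) * x / α) ^ (-α) - x ^ (-α)| ≤ C * t ^ (-α⁻¹) := by
  set c : ℝ := 1 - (2:ℝ) ^ (-α⁻¹) with hcdef
  have h2pos : (0:ℝ) < (2:ℝ) ^ (-α⁻¹) := Real.rpow_pos_of_pos two_pos _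
  have hc0 : 0 < c := by
    have : (2:ℝ) ^ (-α⁻¹) < 1 :=
      Real.rpow_lt_one_of_one_lt_of_neg one_lt_two (neg_lt_zero.mpr (by positivity))
    rw [hcdef]; linarith
  refine ⟨α / c, div_pos hα hc0, ?_⟩
  intro t ht x hx
  have ht0 : (0:ℝ) < t := by linarith
  set u : ℝ := t ^ α⁻¹ with hudef
  have hu2 : (2:ℝ) ^ α⁻¹ ≤ u := Real.rpow_le_rpow (by norm_num) ht (by positivity)
  have h2a : (1:ℝ) < (2:ℝ) ^ α⁻¹ :=
    Real.one_lt_rpow_iff_of_pos two_pos |>.2 (Or.inl ⟨one_lt_two, by positivity⟩)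
  have hu1 : 1 < u := lt_of_lt_of_le h2a hu2
  have hu0 : 0 < u := by linarith
  -- u * 2^{-α⁻¹} ≥ 1
  have hmul : 1 ≤ u * (2:ℝ) ^ (-α⁻¹) := by
    have : (2:ℝ) ^ α⁻¹ * (2:ℝ) ^ (-α⁻¹) = 1 := by
      rw [← Real.rpow_add two_pos]; simp
    nlinarith [hu2, h2pos]
  -- rewrite the argument
  have harg : 1 + (α * (u - 1)) * x / α = 1 + (u - 1) * x := by
    field_simp
  set y : ℝ := (1 + (u - 1) * x) / u with hydef
  have hA0 : 0 < 1 + (u - 1) * x := by nlinarith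
  have hy1 : 1 ≤ y := by
    rw [hydef, le_div_iff₀ hu0]; nlinarith
  have hyx : y ≤ x := by
    rw [hydef, div_le_iff₀ hu0]; nlinarith
  have hylb : 1 + c * (x - 1) ≤ y := by
    rw [hydef, le_div_iff₀ hu0]
    have h1c : 1 - c = (2:ℝ) ^ (-α⁻¹) := by rw [hcdef]; ring
    have huc : 1 ≤ u * (1 - c) := by rw [h1c]; exact hmul
    have hcu : c * u ≤ u - 1 := by nlinarith
    nlinarith [mul_le_mul_of_nonneg_right hcu (sub_nonneg.2 hx)]
  have hy0 : 0 < y := by linarith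
  -- t * (1+(u-1)x)^{-α} = y^{-α}
  have htu : u ^ α = t := Real.rpow_inv_rpow ht0.le hα.ne'
  have hkey : t * (1 + (u - 1) * x) ^ (-α) = y ^ (-α) := by
    rw [hydef, Real.div_rpow hA0.le hu0.le, Real.rpow_neg hu0.le]
    rw [← htu]
    field_simp
  rw [harg, hkey]
  -- |y^{-α} - x^{-α}| = y^{-α} - x^{-α}
  have hx0 : (0:ℝ) < x := by linarith
  have hmono : x ^ (-α) ≤ y ^ (-α) :=
    Real.rpow_le_rpow_of_nonpos hy0 hyx (by linarith)
  rw [abs_of_nonneg (by linarith)]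
  -- tangent line bound: y^{-α} - x^{-α} ≤ α * (x - y) * y^{-α} / y
  have hxy' : 0 ≤ (x - y) / y := div_nonneg (by linarith) hy0.le
  have hbern := bernoulli_neg_aux hxy' hα.le
  have hxyrw : 1 + (x - y) / y = x / y := by field_simp; ring
  rw [hxyrw] at hbern
  have hdiv : (x / y) ^ (-α) = x ^ (-α) / y ^ (-α) := Real.div_rpow hx0.le hy0.le _
  have hyneg : 0 < y ^ (-α) := Real.rpow_pos_of_pos hy0 _
  have htangent : y ^ (-α) - x ^ (-α) ≤ α * ((x - y) / y) * y ^ (-α) := by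
    rw [hdiv] at hbern
    have := mul_le_mul_of_nonneg_right hbern hyneg.le
    rw [div_mul_cancel₀ _ hyneg.ne'] at this
    nlinarith [this]
  refine htangent.trans ?_
  -- x - y = (x-1)/u
  have hxmy : x - y = (x - 1) / u := by
    rw [hydef]; field_simp; ring
  have hyneg1 : y ^ (-α) ≤ 1 :=
    Real.rpow_le_one_of_one_le_of_nonpos hy1 (by linarith)
  have htinv : t ^ (-α⁻¹) = u⁻¹ := by
    rw [Real.rpow_neg ht0.le, hudef]
  rw [htinv, hxmy]
  -- α * ((x-1)/u/y) * y^{-α} ≤ (α/c) * u⁻¹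
  have hstep1 : α * ((x - 1) / u / y) * y ^ (-α) ≤ α * ((x - 1) / u / y) := by
    have hnn : 0 ≤ α * ((x - 1) / u / y) := by
      apply mul_nonneg hα.le
      exact div_nonneg (div_nonneg (by linarith) hu0.le) hy0.le
    exact mul_le_of_le_one_right hnn hyneg1
  refine hstep1.trans ?_
  have h1 : (x - 1) / y ≤ 1 / c := by
    rw [div_le_div_iff₀ hy0 hc0]; linarith
  calc α * ((x - 1) / u / y) = (α / u) * ((x - 1) / y) := by ring
    _ ≤ (α / u) * (1 / c) := by
        exact mul_le_mul_of_nonneg_left h1 (div_nonneg hα.le hu0.le)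
    _ = α / c * u⁻¹ := by ring
end

section
/- Multivariate exponent measure of the Gumbel copula (inclusion–exclusion formula): Let α>0, β≥1 and l≥1. Let (X_1,…,X_l) be a random vector whose joint cdf is F(x_1,…,x_l) = exp(−(Σ_{i=1}^{l}(−log F_i(x_i))^β)^{1/β}), where F_1,…,F_l are the marginal cdfs (the l-dimensional Gumbel copula with dependence coefficient β), and let a_1,…,a_l:(1,∞)→(0,∞) satisfy, for every x>0 and every i, t·(1−F_i(a_i(t)x)) → x^{−α} as t→∞. Then for every (x_1,…,x_l) with positive coordinates, t·P(X_1 > a_1(t)x_1, …, X_l > a_l(t)x_l) → Σ_{m=1}^{l} (−1)^{m+1} Σ_{1≤i_1<…<i_m≤l} ( x_{i_1}^{−αβ} + … + x_{i_m}^{−αβ} )^{1/β} as t→∞. -/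
open MeasureTheory Filter Topology

noncomputable section

/-- Inclusion–exclusion for probability measures. -/
lemma gumbel_aux_ie {Ω : Type*} [MeasurableSpace Ω] (P : Measure Ω) [IsProbabilityMeasure P]
    {l : ℕ} (A : Fin l → Set Ω) (hA : ∀ i, MeasurableSet (A i)) :
    (P {ω | ∀ i, ω ∉ A i}).toReal =
      ∑ S ∈ (Finset.univ : Finset (Fin l)).powerset,
        (-1 : ℝ) ^ S.card * (P (⋂ i ∈ S, A i)).toReal := by
  have hEmeas : MeasurableSet {ω | ∀ i, ω ∉ A i} := by
    have h : {ω | ∀ i, ω ∉ A i} = (⋃ i, A i)ᶜ := by ext ω; simp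
    rw [h]; exact (MeasurableSet.iUnion fun i => hA i).compl
  have hSmeas : ∀ S : Finset (Fin l), MeasurableSet (⋂ i ∈ S, A i) := fun S =>
    MeasurableSet.biInter S.countable_toSet (fun i _ => hA i)
  have hpt : ∀ ω, Set.indicator {ω | ∀ i, ω ∉ A i} (1 : Ω → ℝ) ω
      = ∑ S ∈ (Finset.univ : Finset (Fin l)).powerset,
          (-1 : ℝ) ^ S.card * Set.indicator (⋂ i ∈ S, A i) (1 : Ω → ℝ) ω := by
    intro ω
    set g : Fin l → ℝ := fun i => Set.indicator (A i) (1 : Ω → ℝ) ω with hg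
    have hind : ∀ S : Finset (Fin l),
        Set.indicator (⋂ i ∈ S, A i) (1 : Ω → ℝ) ω = ∏ i ∈ S, g i := by
      intro S
      by_cases h : ω ∈ ⋂ i ∈ S, A i
      · rw [Set.indicator_of_mem h]
        simp only [Set.mem_iInter] at h
        exact (Finset.prod_eq_one fun i hi => by
          simp [hg, Set.indicator_of_mem (h i hi)]).symm
      · rw [Set.indicator_of_notMem h]
        simp only [Set.mem_iInter, not_forall] at h
        obtain ⟨i, hi, hωi⟩ := h
        exact (Finset.prod_eq_zero hi (by simp [hg, Set.indicator_of_notMem hωi])).symm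
    have hleft : Set.indicator {ω | ∀ i, ω ∉ A i} (1 : Ω → ℝ) ω
        = ∏ i, (1 - g i) := by
      by_cases h : ∀ i, ω ∉ A i
      · rw [Set.indicator_of_mem (show ω ∈ {ω | ∀ i, ω ∉ A i} from h)]
        exact (Finset.prod_eq_one fun i _ => by
          simp [hg, Set.indicator_of_notMem (h i)]).symm
      · rw [Set.indicator_of_notMem (show ω ∉ {ω | ∀ i, ω ∉ A i} from h)]
        push_neg at h; obtain ⟨i, hi⟩ := h
        exact (Finset.prod_eq_zero (Finset.mem_univ i)
          (by simp [hg, Set.indicator_of_mem hi])).symm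
    have hexp : (∏ i, (1 - g i))
        = ∑ S ∈ (Finset.univ : Finset (Fin l)).powerset, (-1 : ℝ) ^ S.card * ∏ i ∈ S, g i := by
      have h1 : (∏ i, (1 - g i)) = ∏ i, (-(g i) + 1) := by
        apply Finset.prod_congr rfl; intro i _; ring
      rw [h1, Finset.prod_add]
      apply Finset.sum_congr rfl
      intro S _
      have h2 : (∏ i ∈ S, (-(g i))) = (-1 : ℝ) ^ S.card * ∏ i ∈ S, g i := by
        have : (∏ i ∈ S, (-(g i))) = ∏ i ∈ S, ((-1 : ℝ) * g i) := by
          apply Finset.prod_congr rfl; intro i _; ring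
        rw [this, Finset.prod_mul_distrib, Finset.prod_const]
      rw [h2]; simp
    rw [hleft, hexp]
    exact Finset.sum_congr rfl fun S _ => by rw [hind S]
  have hInt : ∀ S : Finset (Fin l),
      Integrable (fun ω => (-1 : ℝ) ^ S.card * Set.indicator (⋂ i ∈ S, A i) (1 : Ω → ℝ) ω) P :=
    fun S => ((integrable_const (1 : ℝ)).indicator (hSmeas S)).const_mul _
  calc (P {ω | ∀ i, ω ∉ A i}).toReal
      = ∫ ω, Set.indicator {ω | ∀ i, ω ∉ A i} (1 : Ω → ℝ) ω ∂P :=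
        (integral_indicator_one hEmeas).symm
    _ = ∫ ω, ∑ S ∈ (Finset.univ : Finset (Fin l)).powerset,
          (-1 : ℝ) ^ S.card * Set.indicator (⋂ i ∈ S, A i) (1 : Ω → ℝ) ω ∂P :=
        integral_congr_ae (ae_of_all _ hpt)
    _ = ∑ S ∈ (Finset.univ : Finset (Fin l)).powerset,
          ∫ ω, (-1 : ℝ) ^ S.card * Set.indicator (⋂ i ∈ S, A i) (1 : Ω → ℝ) ω ∂P :=
        integral_finset_sum _ (fun S _ => hInt S)
    _ = ∑ S ∈ (Finset.univ : Finset (Fin l)).powerset,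
          (-1 : ℝ) ^ S.card * (P (⋂ i ∈ S, A i)).toReal := by
        apply Finset.sum_congr rfl; intro S _
        rw [MeasureTheory.integral_const_mul, integral_indicator_one (hSmeas S), measureReal_def]

/-- The joint cdf restricted to a subset of coordinates. -/
lemma gumbel_aux_cdf {Ω : Type*} [MeasurableSpace Ω] (P : Measure Ω) [IsProbabilityMeasure P]
    {l : ℕ} (X : Ω → Fin l → ℝ) (F : Fin l → ℝ → ℝ)
    (hmarg : ∀ i s, F i s = (P {ω | X ω i ≤ s}).toReal)
    (β : ℝ) (hβ0 : 0 < β)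
    (hjoint : ∀ x : Fin l → ℝ,
      (P {ω | ∀ i, X ω i ≤ x i}).toReal =
        Real.exp (-((∑ i, (-Real.log (F i (x i))) ^ β) ^ (β⁻¹))))
    (c : Fin l → ℝ) (S : Finset (Fin l)) :
    (P (⋂ i ∈ S, {ω | X ω i ≤ c i})).toReal =
      Real.exp (-((∑ i ∈ S, (-Real.log (F i (c i))) ^ β) ^ (β⁻¹))) := by
  classical
  set D : ℕ → Set Ω := fun n => {ω | ∀ i, X ω i ≤ (if i ∈ S then c i else (n : ℝ))} with hD
  have hmono : Monotone D := by
    intro n m hnm ω hω i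
    by_cases hi : i ∈ S
    · simpa [hi] using hω i
    · have := hω i
      simp only [hi, if_false] at this ⊢
      exact this.trans (by exact_mod_cast Nat.cast_le.2 hnm)
  have hunion : (⋃ n, D n) = ⋂ i ∈ S, {ω | X ω i ≤ c i} := by
    ext ω
    simp only [Set.mem_iUnion, Set.mem_iInter, Set.mem_setOf_eq, hD]
    constructor
    · rintro ⟨n, hn⟩ i hi
      simpa [hi] using hn i
    · intro h
      obtain ⟨n, hn⟩ := exists_nat_ge (∑ j, |X ω j|)
      refine ⟨n, fun i => ?_⟩
      by_cases hi : i ∈ S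
      · simpa [hi] using h i hi
      · simp only [hi, if_false]
        calc X ω i ≤ |X ω i| := le_abs_self _
          _ ≤ ∑ j, |X ω j| :=
              Finset.single_le_sum (f := fun j => |X ω j|) (fun j _ => abs_nonneg _)
                (Finset.mem_univ i)
          _ ≤ n := hn
  have hL : Tendsto (fun n => (P (D n)).toReal) atTop
      (𝓝 ((P (⋂ i ∈ S, {ω | X ω i ≤ c i})).toReal)) := by
    have h := tendsto_measure_iUnion_atTop (μ := P) hmono
    rw [hunion] at h
    exact (ENNReal.tendsto_toReal (measure_ne_top P _)).comp h
  have hF1 : ∀ j, Tendsto (fun n : ℕ => F j (n : ℝ)) atTop (𝓝 1) := by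
    intro j
    have hmono' : Monotone (fun n : ℕ => {ω : Ω | X ω j ≤ (n : ℝ)}) := by
      intro n m h ω hω
      simp only [Set.mem_setOf_eq] at hω ⊢
      exact le_trans hω (Nat.cast_le.2 h)
    have hu : (⋃ (n : ℕ), {ω : Ω | X ω j ≤ (n : ℝ)}) = Set.univ := by
      ext ω
      simp only [Set.mem_iUnion, Set.mem_univ, iff_true, Set.mem_setOf_eq]
      exact exists_nat_ge (X ω j)
    have h := tendsto_measure_iUnion_atTop (μ := P) hmono'
    rw [hu, measure_univ] at h
    have h2 := (ENNReal.tendsto_toReal ENNReal.one_ne_top).comp h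
    simp only [ENNReal.toReal_one] at h2
    exact h2.congr fun n => (hmarg j n).symm
  have hterm : ∀ i : Fin l,
      Tendsto (fun n : ℕ => (-Real.log (F i (if i ∈ S then c i else (n : ℝ)))) ^ β) atTop
        (𝓝 (if i ∈ S then (-Real.log (F i (c i))) ^ β else 0)) := by
    intro i
    by_cases hi : i ∈ S
    · simp only [hi, if_true]; exact tendsto_const_nhds
    · simp only [hi, if_false]
      have hlog : Tendsto (fun n : ℕ => -Real.log (F i (n : ℝ))) atTop (𝓝 0) := by
        have h := ((Real.continuousAt_log one_ne_zero).tendsto.comp (hF1 i)).neg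
        simpa using h
      have hr := (Real.continuousAt_rpow_const 0 β (Or.inr hβ0.le)).tendsto.comp hlog
      simpa [Real.zero_rpow hβ0.ne', Function.comp_def] using hr
  have hsum : Tendsto
      (fun n : ℕ => ∑ i, (-Real.log (F i (if i ∈ S then c i else (n : ℝ)))) ^ β) atTop
      (𝓝 (∑ i ∈ S, (-Real.log (F i (c i))) ^ β)) := by
    have h := tendsto_finset_sum Finset.univ (fun i _ => hterm i)
    simpa [Finset.sum_ite_mem, Finset.univ_inter] using h
  have hcont : ContinuousAt (fun z : ℝ => Real.exp (-(z ^ (β⁻¹))))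
      (∑ i ∈ S, (-Real.log (F i (c i))) ^ β) := by
    have h1 : ContinuousAt (fun z : ℝ => z ^ (β⁻¹))
        (∑ i ∈ S, (-Real.log (F i (c i))) ^ β) :=
      Real.continuousAt_rpow_const _ _ (Or.inr (by positivity))
    exact Real.continuous_exp.continuousAt.comp h1.neg
  have hR : Tendsto (fun n => (P (D n)).toReal) atTop
      (𝓝 (Real.exp (-((∑ i ∈ S, (-Real.log (F i (c i))) ^ β) ^ (β⁻¹))))) := by
    have h := hcont.tendsto.comp hsum
    exact h.congr fun n => (hjoint (fun i => if i ∈ S then c i else (n : ℝ))).symm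
  exact tendsto_nhds_unique hL hR

/-- Multivariate exponent measure of the Gumbel copula (inclusion–exclusion formula):
if the joint cdf of `(X_1,…,X_l)` is the `l`-dimensional Gumbel copula of the margins and
`t(1−F_i(a_i(t)x)) → x^{−α}` for each `i`, then
`t·P(X_1 > a_1(t)x_1, …, X_l > a_l(t)x_l)` converges to
`∑_{m=1}^{l} (−1)^{m+1} ∑_{i_1<…<i_m} (x_{i_1}^{−αβ} + … + x_{i_m}^{−αβ})^{1/β}`. -/
theorem gumbel_multivariate_exponent_measure
    (α β : ℝ) (hα : 0 < α) (hβ : 1 ≤ β)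
    (l : ℕ) (hl : 1 ≤ l)
    {Ω : Type*} [MeasurableSpace Ω] (P : Measure Ω) [IsProbabilityMeasure P]
    (X : Ω → Fin l → ℝ) (hX : Measurable X)
    (F : Fin l → ℝ → ℝ)
    (hmarg : ∀ i s, F i s = (P {ω | X ω i ≤ s}).toReal)
    (hjoint : ∀ x : Fin l → ℝ,
      (P {ω | ∀ i, X ω i ≤ x i}).toReal =
        Real.exp (-((∑ i, (-Real.log (F i (x i))) ^ β) ^ (β⁻¹))))
    (a : Fin l → ℝ → ℝ)
    (hTail : ∀ i, ∀ x : ℝ, 0 < x →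
      Tendsto (fun t : ℝ => t * (1 - F i (a i t * x))) atTop (𝓝 (x ^ (-α)))) :
    ∀ x : Fin l → ℝ, (∀ i, 0 < x i) →
      Tendsto (fun t : ℝ => t * (P {ω | ∀ i, a i t * x i < X ω i}).toReal)
        atTop
        (𝓝 (∑ m ∈ Finset.Icc 1 l, (-1 : ℝ) ^ (m + 1) *
          ∑ s ∈ Finset.powersetCard m (Finset.univ : Finset (Fin l)),
            (∑ i ∈ s, x i ^ (-(α * β))) ^ (β⁻¹))) := by
  classical
  intro x hx
  have hβ0 : (0 : ℝ) < β := lt_of_lt_of_le one_pos hβ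
  -- the margins applied along the moving thresholds
  set u : Fin l → ℝ → ℝ := fun i t => F i (a i t * x i) with hu
  set G : Finset (Fin l) → ℝ → ℝ :=
    fun S t => Real.exp (-((∑ i ∈ S, (-Real.log (u i t)) ^ β) ^ (β⁻¹))) with hG
  set L : Finset (Fin l) → ℝ := fun S => (∑ i ∈ S, x i ^ (-(α * β))) ^ (β⁻¹) with hL
  -- basic bounds on `u`
  have hunn : ∀ i t, 0 ≤ u i t := by
    intro i t; simp only [hu, hmarg]; exact ENNReal.toReal_nonneg
  have hule : ∀ i t, u i t ≤ 1 := by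
    intro i t
    simp only [hu, hmarg]
    calc (P {ω | X ω i ≤ a i t * x i}).toReal
        ≤ (P Set.univ).toReal :=
          ENNReal.toReal_mono (measure_ne_top P _) (measure_mono (Set.subset_univ _))
      _ = 1 := by rw [measure_univ, ENNReal.toReal_one]
  have hlognn : ∀ i t, 0 ≤ -Real.log (u i t) := fun i t =>
    neg_nonneg.2 (Real.log_nonpos (hunn i t) (hule i t))
  -- the tail hypothesis in terms of `u`
  have h1 : ∀ i, Tendsto (fun t => t * (1 - u i t)) atTop (𝓝 (x i ^ (-α))) := fun i =>
    hTail i (x i) (hx i)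
  -- `u i t → 1`
  have h2 : ∀ i, Tendsto (fun t => u i t) atTop (𝓝 1) := by
    intro i
    have hsub : Tendsto (fun t => 1 - u i t) atTop (𝓝 0) := by
      have hm := (h1 i).mul tendsto_inv_atTop_zero
      rw [mul_zero] at hm
      apply hm.congr'
      filter_upwards [eventually_ge_atTop (1 : ℝ)] with t ht
      have ht0 : t ≠ 0 := by linarith
      rw [mul_comm t, mul_assoc, mul_inv_cancel₀ ht0, mul_one]
    have := tendsto_const_nhds.sub hsub (α := ℝ) (f := fun _ : ℝ => (1 : ℝ))
    simpa using this
  have hupos : ∀ i, ∀ᶠ t in atTop, 0 < u i t := fun i =>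
    (h2 i).eventually (eventually_gt_nhds one_pos)
  -- `t * (-log u i t) → x i ^ (-α)`
  have h3 : ∀ i, Tendsto (fun t => t * (-Real.log (u i t))) atTop (𝓝 (x i ^ (-α))) := by
    intro i
    have hup : Tendsto (fun t => (t * (1 - u i t)) * (u i t)⁻¹) atTop (𝓝 (x i ^ (-α))) := by
      have := (h1 i).mul ((h2 i).inv₀ one_ne_zero)
      simpa using this
    refine tendsto_of_tendsto_of_tendsto_of_le_of_le' (h1 i) hup ?_ ?_
    · filter_upwards [hupos i, eventually_ge_atTop (0 : ℝ)] with t hpos ht0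
      have hlog := Real.log_le_sub_one_of_pos hpos
      have : 1 - u i t ≤ -Real.log (u i t) := by linarith
      exact mul_le_mul_of_nonneg_left this ht0
    · filter_upwards [hupos i, eventually_ge_atTop (0 : ℝ)] with t hpos ht0
      have h1' := Real.log_le_sub_one_of_pos (inv_pos.2 hpos)
      rw [Real.log_inv] at h1'
      have heq : (u i t)⁻¹ - 1 = (1 - u i t) * (u i t)⁻¹ := by field_simp
      rw [heq] at h1'
      calc t * (-Real.log (u i t)) ≤ t * ((1 - u i t) * (u i t)⁻¹) :=
            mul_le_mul_of_nonneg_left h1' ht0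
        _ = (t * (1 - u i t)) * (u i t)⁻¹ := by ring
  -- per–subset limits
  have hlim : ∀ S : Finset (Fin l), Tendsto (fun t => t * (1 - G S t)) atTop (𝓝 (L S)) := by
    intro S
    have hxpow : ∀ i : Fin l, (x i ^ (-α)) ^ β = x i ^ (-(α * β)) := by
      intro i
      rw [← Real.rpow_mul (hx i).le, neg_mul]
    have hS1 : Tendsto (fun t => ∑ i ∈ S, (t * (-Real.log (u i t))) ^ β) atTop
        (𝓝 (∑ i ∈ S, x i ^ (-(α * β)))) := by
      apply tendsto_finset_sum
      intro i _
      have h := (Real.continuousAt_rpow_const (x i ^ (-α)) β (Or.inr hβ0.le)).tendsto.comp (h3 i)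
      rw [← hxpow i]
      exact h
    have hS2 : Tendsto (fun t => t * ((∑ i ∈ S, (-Real.log (u i t)) ^ β) ^ (β⁻¹))) atTop
        (𝓝 (L S)) := by
      have hc := (Real.continuousAt_rpow_const (∑ i ∈ S, x i ^ (-(α * β))) (β⁻¹)
        (Or.inr (by positivity))).tendsto.comp hS1
      apply hc.congr'
      filter_upwards [eventually_gt_atTop (0 : ℝ)] with t ht
      have hterm : ∀ i ∈ S, (t * (-Real.log (u i t))) ^ β = t ^ β * (-Real.log (u i t)) ^ β :=
        fun i _ => Real.mul_rpow ht.le (hlognn i t)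
      simp only [Function.comp]
      rw [Finset.sum_congr rfl hterm, ← Finset.mul_sum,
        Real.mul_rpow (by positivity)
          (Finset.sum_nonneg fun i _ => Real.rpow_nonneg (hlognn i t) β),
        Real.rpow_rpow_inv ht.le hβ0.ne']
    have hS3 : Tendsto (fun t => (∑ i ∈ S, (-Real.log (u i t)) ^ β) ^ (β⁻¹)) atTop (𝓝 0) := by
      have hm := hS2.mul tendsto_inv_atTop_zero
      rw [mul_zero] at hm
      apply hm.congr'
      filter_upwards [eventually_gt_atTop (0 : ℝ)] with t ht
      rw [mul_comm t, mul_assoc, mul_inv_cancel₀ ht.ne', mul_one]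
    have hsnn : ∀ t, 0 ≤ (∑ i ∈ S, (-Real.log (u i t)) ^ β) ^ (β⁻¹) := fun t =>
      Real.rpow_nonneg (Finset.sum_nonneg fun i _ => Real.rpow_nonneg (hlognn i t) β) _
    -- squeeze for `t (1 - exp (-s))`
    have hlow : Tendsto
        (fun t => (t * ((∑ i ∈ S, (-Real.log (u i t)) ^ β) ^ (β⁻¹))) *
          Real.exp (-((∑ i ∈ S, (-Real.log (u i t)) ^ β) ^ (β⁻¹)))) atTop (𝓝 (L S)) := by
      have hneg : Tendsto (fun t => -((∑ i ∈ S, (-Real.log (u i t)) ^ β) ^ (β⁻¹)))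
          atTop (𝓝 0) := by simpa using hS3.neg
      have hexp := (Real.continuous_exp.tendsto 0).comp hneg
      rw [Real.exp_zero] at hexp
      have hm := hS2.mul hexp
      rw [mul_one] at hm
      exact hm
    refine tendsto_of_tendsto_of_tendsto_of_le_of_le' hlow hS2 ?_ ?_
    · filter_upwards [eventually_ge_atTop (0 : ℝ)] with t ht0
      set s := (∑ i ∈ S, (-Real.log (u i t)) ^ β) ^ (β⁻¹) with hs
      have hsn : 0 ≤ s := hsnn t
      have hE := Real.add_one_le_exp s
      have hpos := Real.exp_pos s
      have hinv : Real.exp (-s) = (Real.exp s)⁻¹ := Real.exp_neg s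
      have hkey : s * Real.exp (-s) ≤ 1 - Real.exp (-s) := by
        rw [hinv]
        have h2' : Real.exp s * (Real.exp s)⁻¹ = 1 := mul_inv_cancel₀ hpos.ne'
        nlinarith [mul_le_mul_of_nonneg_right hE (inv_pos.2 hpos).le]
      have : (t * s) * Real.exp (-s) = t * (s * Real.exp (-s)) := by ring
      rw [this]
      exact mul_le_mul_of_nonneg_left hkey ht0
    · filter_upwards [eventually_ge_atTop (0 : ℝ)] with t ht0
      set s := (∑ i ∈ S, (-Real.log (u i t)) ^ β) ^ (β⁻¹) with hs
      have hE := Real.add_one_le_exp (-s)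
      have hkey : 1 - Real.exp (-s) ≤ s := by linarith
      exact mul_le_mul_of_nonneg_left hkey ht0
  -- the per-`t` inclusion–exclusion identity
  have hkey : ∀ t : ℝ, t * (P {ω | ∀ i, a i t * x i < X ω i}).toReal
      = ∑ S ∈ (Finset.univ : Finset (Fin l)).powerset,
          (-1 : ℝ) ^ (S.card + 1) * (t * (1 - G S t)) := by
    intro t
    have hA : ∀ i, MeasurableSet {ω | X ω i ≤ a i t * x i} := fun i =>
      measurableSet_le ((measurable_pi_apply i).comp hX) measurable_const
    have hset : {ω | ∀ i, a i t * x i < X ω i}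
        = {ω | ∀ i, ω ∉ {ω | X ω i ≤ a i t * x i}} := by
      ext ω; simp [not_le]
    rw [hset, gumbel_aux_ie P _ hA]
    have hGG : ∀ S ∈ (Finset.univ : Finset (Fin l)).powerset,
        (P (⋂ i ∈ S, {ω | X ω i ≤ a i t * x i})).toReal = G S t := fun S _ =>
      gumbel_aux_cdf P X F hmarg β hβ0 hjoint (fun i => a i t * x i) S
    rw [Finset.sum_congr rfl (fun S hS => by rw [hGG S hS])]
    haveI : Nonempty (Fin l) := ⟨⟨0, hl⟩⟩
    have hzero : (∑ S ∈ (Finset.univ : Finset (Fin l)).powerset, (-1 : ℝ) ^ S.card) = 0 := by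
      have h := Finset.sum_powerset_neg_one_pow_card_of_nonempty
        (x := (Finset.univ : Finset (Fin l))) Finset.univ_nonempty
      have := congrArg (fun z : ℤ => (z : ℝ)) h
      push_cast at this
      simpa using this
    have hcalc : (∑ S ∈ (Finset.univ : Finset (Fin l)).powerset,
        (-1 : ℝ) ^ (S.card + 1) * (t * (1 - G S t)))
        = t * ∑ S ∈ (Finset.univ : Finset (Fin l)).powerset, (-1 : ℝ) ^ S.card * G S t := by
      have hterm : ∀ S : Finset (Fin l),
          (-1 : ℝ) ^ (S.card + 1) * (t * (1 - G S t))
            = (-1 : ℝ) ^ S.card * (-t) + t * ((-1 : ℝ) ^ S.card * G S t) := by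
        intro S; ring
      rw [Finset.sum_congr rfl (fun S _ => hterm S), Finset.sum_add_distrib,
        ← Finset.sum_mul, hzero, zero_mul, zero_add, ← Finset.mul_sum]
    exact hcalc.symm
  -- assemble
  have hsumlim : Tendsto
      (fun t => ∑ S ∈ (Finset.univ : Finset (Fin l)).powerset,
        (-1 : ℝ) ^ (S.card + 1) * (t * (1 - G S t))) atTop
      (𝓝 (∑ S ∈ (Finset.univ : Finset (Fin l)).powerset, (-1 : ℝ) ^ (S.card + 1) * L S)) :=
    tendsto_finset_sum _ (fun S _ => (hlim S).const_mul _)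
  have htarget : (∑ S ∈ (Finset.univ : Finset (Fin l)).powerset,
        (-1 : ℝ) ^ (S.card + 1) * L S)
      = ∑ m ∈ Finset.Icc 1 l, (-1 : ℝ) ^ (m + 1) *
          ∑ s ∈ Finset.powersetCard m (Finset.univ : Finset (Fin l)),
            (∑ i ∈ s, x i ^ (-(α * β))) ^ (β⁻¹) := by
    rw [Finset.sum_powerset]
    have hcard : (Finset.univ : Finset (Fin l)).card = l := by
      simp
    rw [hcard]
    have hinner : ∀ m : ℕ, (∑ S ∈ Finset.powersetCard m (Finset.univ : Finset (Fin l)),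
        (-1 : ℝ) ^ (S.card + 1) * L S)
        = (-1 : ℝ) ^ (m + 1) * ∑ S ∈ Finset.powersetCard m (Finset.univ : Finset (Fin l)),
            (∑ i ∈ S, x i ^ (-(α * β))) ^ (β⁻¹) := by
      intro m
      rw [Finset.mul_sum]
      apply Finset.sum_congr rfl
      intro S hS
      rw [hL, (Finset.mem_powersetCard.1 hS).2]
    rw [Finset.sum_congr rfl (fun m _ => hinner m)]
    rw [Finset.range_eq_Ico, Finset.sum_eq_sum_Ico_succ_bot (Nat.succ_pos l)]
    rw [Nat.succ_eq_add_one, Finset.Ico_add_one_right_eq_Icc]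
    have h0 : ((-1 : ℝ) ^ (0 + 1) *
        ∑ S ∈ Finset.powersetCard 0 (Finset.univ : Finset (Fin l)),
          (∑ i ∈ S, x i ^ (-(α * β))) ^ (β⁻¹)) = 0 := by
      rw [Finset.powersetCard_zero, Finset.sum_singleton, Finset.sum_empty,
        Real.zero_rpow (inv_ne_zero hβ0.ne')]
      ring
    rw [h0, zero_add]
  rw [← htarget]
  exact hsumlim.congr fun t => (hkey t).symm
end
end
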